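/- (Theorem 1, identification form.) Let (Ω, F, P) be a probability space on a standard Borel space, let X be a real-valued integrable random variable, V an ℝᵈ-valued random variable, and ε₀, ε₁ integrable real-valued random variables such that the pair (ε₀, ε₁) is conditionally independent of X given σ(V). Let Y = β₀ + β₁·X + ε₀ + ε₁ for real constants β₀, β₁. Suppose X is not almost surely equal to h(V) for any Borel-measurable function h : ℝᵈ → ℝ. Then β₁ is identified: for any real constants β₀', β₁' and any Borel-measurable g : ℝᵈ → ℝ such that E[Y | σ(X, V)] = β₀' + β₁'·X + g(V) almost surely, necessarily β₁' = β₁. -/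

import Mathlib

open MeasureTheory ProbabilityTheory

/-- Pull-out identity: for an `mV`-measurable integrable `u` and a measurable set `t`,
`∫_t u = ∫ u · E[1_t | mV]`. -/
lemma stmt_9_aux_pull {Ω : Type*} {mV mΩ : MeasurableSpace Ω} (hmV : mV ≤ mΩ)
    (μ : Measure Ω) [IsProbabilityMeasure μ] (u : Ω → ℝ)
    (hu : StronglyMeasurable[mV] u) (hu_int : Integrable u μ)
    (t : Set Ω) (ht : MeasurableSet[mΩ] t) :
    ∫ x in t, u x ∂μ = ∫ x, u x * (μ[t.indicator (fun _ => (1 : ℝ))|mV]) x ∂μ := by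
  have h1t_int : Integrable (t.indicator fun _ => (1 : ℝ)) μ :=
    (integrable_const (1 : ℝ)).indicator ht
  have hut : (u * t.indicator fun _ => (1 : ℝ)) = t.indicator u := by
    funext x
    by_cases hx : x ∈ t <;>
      simp [Pi.mul_apply, Set.indicator_of_mem, Set.indicator_of_notMem, hx]
  have hut_int : Integrable (u * t.indicator fun _ => (1 : ℝ)) μ := by
    rw [hut]; exact hu_int.indicator ht
  have hmul := condExp_mul_of_stronglyMeasurable_left (μ := μ) (m := mV) hu hut_int h1t_int
  calc ∫ x in t, u x ∂μ = ∫ x, t.indicator u x ∂μ := (integral_indicator ht).symm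
    _ = ∫ x, (u * t.indicator fun _ => (1 : ℝ)) x ∂μ := by rw [hut]
    _ = ∫ x, (μ[(u * t.indicator fun _ => (1 : ℝ))|mV]) x ∂μ := (integral_condExp hmV).symm
    _ = ∫ x, u x * (μ[t.indicator (fun _ => (1 : ℝ))|mV]) x ∂μ := by
        refine integral_congr_ae (hmul.mono fun x hx => ?_)
        simpa [Pi.mul_apply] using hx

/-- Core rectangle identity: if the conditional product rule holds for events of `mε` against
the fixed event `t`, then `∫_{t ∩ a} ε = ∫_{t ∩ a} E[ε | mV]` for any `mV`-event `a` and any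
`mε`-measurable integrable `ε`. -/
lemma stmt_9_aux_core {Ω : Type*} {mV mε mΩ : MeasurableSpace Ω}
    (hmV : mV ≤ mΩ) (hmε : mε ≤ mΩ)
    (μ : Measure Ω) [IsProbabilityMeasure μ] (ε : Ω → ℝ)
    (hε_sm : StronglyMeasurable[mε] ε) (hεint : Integrable ε μ)
    (t a : Set Ω) (ht : MeasurableSet[mΩ] t) (haΩ : MeasurableSet[mΩ] a)
    (haA : MeasurableSet[mV] a)
    (hCIprod : ∀ s', MeasurableSet[mε] s' →
      (μ[(s' ∩ t).indicator (fun _ => (1 : ℝ))|mV]) =ᵐ[μ]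
        fun ω => (μ[s'.indicator (fun _ => (1 : ℝ))|mV]) ω *
          (μ[t.indicator (fun _ => (1 : ℝ))|mV]) ω) :
    ∫ x in t ∩ a, ε x ∂μ = ∫ x in t ∩ a, (μ[ε|mV]) x ∂μ := by
  have main : ∀ ⦃f : Ω → ℝ⦄, MemLp f 1 μ → AEStronglyMeasurable[mε] f μ →
      ∫ x in t ∩ a, f x ∂μ = ∫ x in t ∩ a, (μ[f|mV]) x ∂μ := by
    refine MemLp.induction_stronglyMeasurable hmε ENNReal.one_ne_top
      (fun f => ∫ x in t ∩ a, f x ∂μ = ∫ x in t ∩ a, (μ[f|mV]) x ∂μ) ?_ ?_ ?_ ?_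
    · -- indicator case
      rintro c s' hs' _
      have hs'Ω : MeasurableSet s' := hmε _ hs'
      set I1 : Ω → ℝ := μ[s'.indicator fun _ => (1 : ℝ)|mV] with hI1_def
      set It : Ω → ℝ := μ[t.indicator fun _ => (1 : ℝ)|mV] with hIt_def
      have hst_int : Integrable ((s' ∩ t).indicator fun _ => (1 : ℝ)) μ :=
        (integrable_const (1 : ℝ)).indicator (hs'Ω.inter ht)
      have hprod := hCIprod s' hs'
      -- common value: ∫ x in a, I1 x * It x
      have key : (μ ((t ∩ a) ∩ s')).toReal = ∫ x in a, I1 x * It x ∂μ := by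
        have h1 : ∫ x in a, (s' ∩ t).indicator (fun _ => (1 : ℝ)) x ∂μ
            = (μ ((t ∩ a) ∩ s')).toReal := by
          rw [setIntegral_indicator (hs'Ω.inter ht), setIntegral_const]
          have : a ∩ (s' ∩ t) = (t ∩ a) ∩ s' := by
            ext x; simp only [Set.mem_inter_iff]; tauto
          rw [this, smul_eq_mul, mul_one]; rfl
        have h2 : ∫ x in a, (s' ∩ t).indicator (fun _ => (1 : ℝ)) x ∂μ
            = ∫ x in a, (μ[(s' ∩ t).indicator fun _ => (1 : ℝ)|mV]) x ∂μ :=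
          (setIntegral_condExp hmV hst_int haA).symm
        have h3 : ∫ x in a, (μ[(s' ∩ t).indicator fun _ => (1 : ℝ)|mV]) x ∂μ
            = ∫ x in a, I1 x * It x ∂μ := by
          refine setIntegral_congr_ae haΩ (hprod.mono fun x hx _ => ?_)
          simpa using hx
        rw [← h1, h2, h3]
      -- LHS
      have hLHS : ∫ x in t ∩ a, s'.indicator (fun _ => c) x ∂μ
          = (μ ((t ∩ a) ∩ s')).toReal * c := by
        rw [setIntegral_indicator hs'Ω, setIntegral_const, smul_eq_mul]; rfl
      -- RHS
      have hIind : μ[s'.indicator fun _ => c|mV] =ᵐ[μ] fun x => c * I1 x := by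
        have hcsmul : s'.indicator (fun _ => c) = c • s'.indicator fun _ => (1 : ℝ) := by
          funext x
          by_cases hx : x ∈ s' <;>
            simp [Set.indicator_of_mem, Set.indicator_of_notMem, hx]
        rw [hcsmul]
        exact (condExp_smul c _ mV).trans (Filter.Eventually.of_forall fun x => by simp [hI1_def])
      have hRHS : ∫ x in t ∩ a, (μ[s'.indicator fun _ => c|mV]) x ∂μ
          = c * ∫ x in a, I1 x * It x ∂μ := by
        have e1 : ∫ x in t ∩ a, (μ[s'.indicator fun _ => c|mV]) x ∂μ
            = ∫ x in t ∩ a, c * I1 x ∂μ :=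
          setIntegral_congr_ae (ht.inter haΩ) (hIind.mono fun x hx _ => hx)
        have e2 : ∫ x in t ∩ a, c * I1 x ∂μ = c * ∫ x in t ∩ a, I1 x ∂μ :=
          integral_const_mul c _
        have hu_sm : StronglyMeasurable[mV] (a.indicator I1) :=
          stronglyMeasurable_condExp.indicator haA
        have hu_int : Integrable (a.indicator I1) μ := integrable_condExp.indicator haΩ
        have e3 : ∫ x in t ∩ a, I1 x ∂μ = ∫ x in t, a.indicator I1 x ∂μ :=
          (setIntegral_indicator haΩ).symm
        have e4 : ∫ x in t, a.indicator I1 x ∂μ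
            = ∫ x, a.indicator I1 x * It x ∂μ :=
          stmt_9_aux_pull hmV μ _ hu_sm hu_int t ht
        have e5 : ∫ x, a.indicator I1 x * It x ∂μ = ∫ x in a, I1 x * It x ∂μ := by
          rw [← integral_indicator haΩ]
          congr 1
          funext x
          by_cases hx : x ∈ a <;>
            simp [Set.indicator_of_mem, Set.indicator_of_notMem, hx]
        rw [e1, e2, e3, e4, e5]
      rw [hLHS, hRHS, key, mul_comm]
    · -- additivity
      intro f f' _ hf hf' _ _ hPf hPf'
      have hfi : Integrable f μ := memLp_one_iff_integrable.mp hf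
      have hfi' : Integrable f' μ := memLp_one_iff_integrable.mp hf'
      have hL : ∫ x in t ∩ a, (f + f') x ∂μ
          = ∫ x in t ∩ a, f x ∂μ + ∫ x in t ∩ a, f' x ∂μ :=
        integral_add hfi.integrableOn hfi'.integrableOn
      have hR : ∫ x in t ∩ a, (μ[f + f'|mV]) x ∂μ
          = ∫ x in t ∩ a, (μ[f|mV]) x ∂μ + ∫ x in t ∩ a, (μ[f'|mV]) x ∂μ := by
        rw [← integral_add integrable_condExp.integrableOn integrable_condExp.integrableOn]
        refine setIntegral_congr_ae (ht.inter haΩ)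
          ((condExp_add (m := mV) hfi hfi').mono fun x hx _ => ?_)
        simpa using hx
      rw [hL, hR, hPf, hPf']
    · -- closedness in L¹
      have heqL : (fun f : lpMeas ℝ ℝ mε 1 μ => ∫ x in t ∩ a, (f : Ω → ℝ) x ∂μ)
          = (fun f : Lp ℝ 1 μ => ∫ x in t ∩ a, f x ∂μ) ∘ Submodule.subtypeL _ := by
        refine funext fun f => integral_congr_ae (ae_restrict_of_ae ?_)
        simp_rw [Submodule.coe_subtypeL', Submodule.coe_subtype]
        exact Filter.Eventually.of_forall fun _ => by trivial
      have heqR : (fun f : lpMeas ℝ ℝ mε 1 μ => ∫ x in t ∩ a, (μ[(f : Ω → ℝ)|mV]) x ∂μ)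
          = (fun f : Lp ℝ 1 μ => ∫ x in t ∩ a, (condExpL1CLM ℝ hmV μ f : Ω → ℝ) x ∂μ) ∘
            Submodule.subtypeL _ := by
        refine funext fun f => ?_
        simp_rw [Function.comp_apply, Submodule.coe_subtypeL', Submodule.coe_subtype]
        refine integral_congr_ae (ae_restrict_of_ae ?_)
        have h1 : μ[(f : Ω → ℝ)|mV] =ᵐ[μ] condExpL1 hmV μ (f : Ω → ℝ) :=
          condExp_ae_eq_condExpL1 hmV _
        rw [condExpL1_eq (L1.integrable_coeFn (f : Lp ℝ 1 μ)),
          Integrable.toL1_coeFn] at h1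
        exact h1
      refine isClosed_eq ?_ ?_
      · rw [heqL]
        exact (continuous_setIntegral _).comp (ContinuousLinearMap.continuous _)
      · rw [heqR]
        exact ((continuous_setIntegral _).comp
          (condExpL1CLM ℝ hmV μ).continuous).comp (ContinuousLinearMap.continuous _)
    · -- respects a.e. equality
      intro f f' hff' _ hPf
      have h1 : ∫ x in t ∩ a, f' x ∂μ = ∫ x in t ∩ a, f x ∂μ :=
        integral_congr_ae (ae_restrict_of_ae hff'.symm)
      have h2 : ∫ x in t ∩ a, (μ[f'|mV]) x ∂μ = ∫ x in t ∩ a, (μ[f|mV]) x ∂μ :=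
        integral_congr_ae (ae_restrict_of_ae (condExp_congr_ae hff'.symm))
      rw [h1, h2, hPf]
  exact main (memLp_one_iff_integrable.mpr hεint) ⟨ε, hε_sm, Filter.EventuallyEq.rfl⟩

/-- Abstract tower property: if the set-integral identity holds on a generating π-system of `m`
containing `mV`, then `E[ε | m] = E[ε | mV]` a.e. -/
lemma stmt_9_aux_tower {Ω : Type*} {mV m mΩ : MeasurableSpace Ω}
    (hmV : mV ≤ mΩ) (hm : m ≤ mΩ) (hmVm : mV ≤ m)
    (μ : Measure Ω) [IsProbabilityMeasure μ] (ε : Ω → ℝ) (hεint : Integrable ε μ)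
    (C : Set (Set Ω)) (hgen : m = MeasurableSpace.generateFrom C) (hpi : IsPiSystem C)
    (hcore : ∀ s ∈ C, ∫ x in s, ε x ∂μ = ∫ x in s, (μ[ε|mV]) x ∂μ) :
    μ[ε|m] =ᵐ[μ] μ[ε|mV] := by
  refine (ae_eq_condExp_of_forall_setIntegral_eq hm hεint
    (fun s _ _ => integrable_condExp.integrableOn) ?_
    ⟨μ[ε|mV], stronglyMeasurable_condExp.mono hmVm, Filter.EventuallyEq.rfl⟩).symm
  refine fun s hs _ => @MeasurableSpace.induction_on_inter Ω m
    (fun s _ => ∫ x in s, (μ[ε|mV]) x ∂μ = ∫ x in s, ε x ∂μ) C hgen hpi ?_ ?_ ?_ ?_ s hs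
  · simp
  · intro u hu
    exact (hcore u hu).symm
  · intro u hum hPu
    have huΩ : MeasurableSet[mΩ] u := hm _ hum
    have h1 := integral_add_compl huΩ (integrable_condExp (f := ε) (m := mV) (μ := μ))
    have h2 := integral_add_compl huΩ hεint
    have h3 : ∫ x, (μ[ε|mV]) x ∂μ = ∫ x, ε x ∂μ := integral_condExp hmV
    linarith
  · intro fseq hdisj hmeas hP
    have hΩi : ∀ i, MeasurableSet[mΩ] (fseq i) := fun i => hm _ (hmeas i)
    rw [integral_iUnion hΩi hdisj integrable_condExp.integrableOn,
      integral_iUnion hΩi hdisj hεint.integrableOn]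
    exact tsum_congr hP

/-- Theorem 1 (identification form): in the simple scenario with `(ε₀, ε₁)` conditionally
independent of `X` given `σ(V)`, `Y = β₀ + β₁·X + ε₀ + ε₁`, and `X` not almost surely a
Borel-measurable function of `V`, the search ad ROAS `β₁` is identified: any additive
representation `E[Y | σ(X, V)] = β₀' + β₁'·X + g(V)` a.s. forces `β₁' = β₁`. -/
theorem stmt_9 {Ω : Type*} {mΩ : MeasurableSpace Ω} [StandardBorelSpace Ω]
    (μ : Measure Ω) [IsProbabilityMeasure μ] {d : ℕ}
    (X : Ω → ℝ) (V : Ω → (Fin d → ℝ)) (ε₀ ε₁ : Ω → ℝ)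
    (hXm : Measurable X) (hVm : Measurable V) (hε₀m : Measurable ε₀) (hε₁m : Measurable ε₁)
    (hXint : Integrable X μ) (hε₀int : Integrable ε₀ μ) (hε₁int : Integrable ε₁ μ)
    (hCI : CondIndepFun (MeasurableSpace.comap V inferInstance) hVm.comap_le
      (fun ω => (ε₀ ω, ε₁ ω)) X μ)
    (β₀ β₁ : ℝ) (Y : Ω → ℝ) (hY : ∀ ω, Y ω = β₀ + β₁ * X ω + ε₀ ω + ε₁ ω)
    (hnot : ¬ ∃ h : (Fin d → ℝ) → ℝ, Measurable h ∧ X =ᵐ[μ] fun ω => h (V ω)) :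
    ∀ (β₀' β₁' : ℝ) (g : (Fin d → ℝ) → ℝ), Measurable g →
      (μ[Y | MeasurableSpace.comap (fun ω => (X ω, V ω)) inferInstance] =ᵐ[μ]
        fun ω => β₀' + β₁' * X ω + g (V ω)) →
      β₁' = β₁ := by
  intro β₀' β₁' g hgm hrep
  have hmV : MeasurableSpace.comap V inferInstance ≤ mΩ := hVm.comap_le
  have hXVm : Measurable fun ω => (X ω, V ω) := hXm.prodMk hVm
  have hm : MeasurableSpace.comap (fun ω => (X ω, V ω)) inferInstance ≤ mΩ := hXVm.comap_le
  have hmVm : MeasurableSpace.comap V inferInstance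
      ≤ MeasurableSpace.comap (fun ω => (X ω, V ω)) inferInstance := by
    have hVeq : (MeasurableSpace.comap V inferInstance : MeasurableSpace Ω)
        = MeasurableSpace.comap (fun ω => (X ω, V ω))
          (MeasurableSpace.comap Prod.snd inferInstance) := by
      rw [MeasurableSpace.comap_comp]; rfl
    rw [hVeq]
    exact MeasurableSpace.comap_mono (measurable_iff_comap_le.mp measurable_snd)
  have hmε : MeasurableSpace.comap (fun ω => (ε₀ ω, ε₁ ω)) inferInstance ≤ mΩ :=
    (hε₀m.prodMk hε₁m).comap_le
  have hε_sm : StronglyMeasurable[MeasurableSpace.comap (fun ω => (ε₀ ω, ε₁ ω)) inferInstance]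
      (fun ω => ε₀ ω + ε₁ ω) := by
    have hpair : Measurable[MeasurableSpace.comap (fun ω => (ε₀ ω, ε₁ ω)) inferInstance]
        fun ω => (ε₀ ω, ε₁ ω) := comap_measurable _
    exact ((measurable_fst.comp hpair).add (measurable_snd.comp hpair)).stronglyMeasurable
  have hεint : Integrable (fun ω => ε₀ ω + ε₁ ω) μ := hε₀int.add hε₁int
  -- step B : tower property via conditional independence
  have hB2 : μ[fun ω => ε₀ ω + ε₁ ω|MeasurableSpace.comap (fun ω => (X ω, V ω)) inferInstance]
      =ᵐ[μ] μ[fun ω => ε₀ ω + ε₁ ω|MeasurableSpace.comap V inferInstance] := by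
    refine stmt_9_aux_tower hmV hm hmVm μ _ hεint
      {s | ∃ B A, MeasurableSet B ∧ MeasurableSet A ∧ s = X ⁻¹' B ∩ V ⁻¹' A} ?_ ?_ ?_
    · -- generation
      rw [show (inferInstance : MeasurableSpace (ℝ × (Fin d → ℝ)))
          = Prod.instMeasurableSpace from rfl, ← generateFrom_prod,
        MeasurableSpace.comap_generateFrom]
      congr 1
      ext u
      constructor
      · rintro ⟨z, hz, rfl⟩
        obtain ⟨B, hB, A, hA, rfl⟩ := hz
        exact ⟨B, A, hB, hA, (Set.mk_preimage_prod X V).symm⟩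
      · rintro ⟨B, A, hB, hA, rfl⟩
        exact ⟨B ×ˢ A, Set.mem_image2_of_mem hB hA, Set.mk_preimage_prod X V⟩
    · -- π-system
      rintro s ⟨B1, A1, hB1, hA1, rfl⟩ u ⟨B2, A2, hB2, hA2, rfl⟩ -
      refine ⟨B1 ∩ B2, A1 ∩ A2, hB1.inter hB2, hA1.inter hA2, ?_⟩
      ext x; simp only [Set.mem_inter_iff, Set.mem_preimage]; tauto
    · -- core identity on rectangles
      rintro s ⟨B, A, hB, hA, rfl⟩
      refine stmt_9_aux_core hmV hmε μ _ hε_sm hεint (X ⁻¹' B) (V ⁻¹' A)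
        (hXm hB) (hVm hA) ⟨A, hA, rfl⟩ ?_
      intro s' hs'
      obtain ⟨E, hE, rfl⟩ := hs'
      exact ((condIndepFun_iff_condExp_inter_preimage_eq_mul
        (hε₀m.prodMk hε₁m) hXm).mp hCI) E B hE hB
  -- step C : E[ε | σ(V)] is a measurable function of V
  obtain ⟨h0, h0m, hC⟩ : ∃ h0 : (Fin d → ℝ) → ℝ, Measurable h0 ∧
      (μ[fun ω => ε₀ ω + ε₁ ω|MeasurableSpace.comap V inferInstance] =ᵐ[μ]
        fun ω => h0 (V ω)) := by
    refine ⟨fun v => ∫ y, y ∂condDistrib (fun ω => ε₀ ω + ε₁ ω) V μ v, ?_, ?_⟩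
    · have hsm : StronglyMeasurable fun p : (Fin d → ℝ) × ℝ => p.2 :=
        measurable_snd.stronglyMeasurable
      exact (hsm.integral_kernel_prod_right'
        (κ := condDistrib (fun ω => ε₀ ω + ε₁ ω) V μ)).measurable
    · exact condExp_ae_eq_integral_condDistrib' hVm hεint
  -- step A : E[Y | m] = β₀ + β₁ X + E[ε | m]
  have hXmM : Measurable[MeasurableSpace.comap (fun ω => (X ω, V ω)) inferInstance] X := by
    have hpair : Measurable[MeasurableSpace.comap (fun ω => (X ω, V ω)) inferInstance]
        fun ω => (X ω, V ω) := comap_measurable _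
    exact measurable_fst.comp hpair
  have hW_sm : StronglyMeasurable[MeasurableSpace.comap (fun ω => (X ω, V ω)) inferInstance]
      fun ω => β₀ + β₁ * X ω :=
    (measurable_const.add (hXmM.const_mul β₁)).stronglyMeasurable
  have hWint : Integrable (fun ω => β₀ + β₁ * X ω) μ :=
    (integrable_const β₀).add (hXint.const_mul β₁)
  have hYeq : Y = (fun ω => β₀ + β₁ * X ω) + fun ω => ε₀ ω + ε₁ ω := by
    funext ω; simp only [Pi.add_apply]; rw [hY ω]; ring
  have stepA : μ[Y|MeasurableSpace.comap (fun ω => (X ω, V ω)) inferInstance] =ᵐ[μ]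
      fun ω => (β₀ + β₁ * X ω) +
        (μ[fun ω => ε₀ ω + ε₁ ω|MeasurableSpace.comap (fun ω => (X ω, V ω)) inferInstance]) ω
      := by
    rw [hYeq]
    refine (condExp_add hWint hεint _).trans ?_
    rw [condExp_of_stronglyMeasurable hm hW_sm hWint]
    exact Filter.Eventually.of_forall fun ω => by simp
  -- combine everything
  have hfinal : ∀ᵐ ω ∂μ, β₀ + β₁ * X ω + h0 (V ω) = β₀' + β₁' * X ω + g (V ω) := by
    filter_upwards [hrep, stepA, hB2, hC] with ω h1 h2 h3 h4
    have h5 : (β₀ + β₁ * X ω) +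
        (μ[fun ω => ε₀ ω + ε₁ ω|MeasurableSpace.comap (fun ω => (X ω, V ω)) inferInstance]) ω
        = β₀' + β₁' * X ω + g (V ω) := by
      rw [← h2]; exact h1
    rw [h3, h4] at h5
    linarith
  by_contra hne
  have hδ : β₁' - β₁ ≠ 0 := sub_ne_zero.mpr hne
  refine hnot ⟨fun v => (β₀ - β₀' + h0 v - g v) / (β₁' - β₁), ?_, ?_⟩
  · exact ((measurable_const.add h0m).sub hgm).div_const _
  · filter_upwards [hfinal] with ω hω
    field_simp
    linarith
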